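/- In every congestion game, every sequence of improvement steps is finite; that is, there is no infinite sequence of states s^0, s^1, s^2, … in which each state s^{k+1} is obtained from s^k by some player i unilaterally changing his strategy so that c_i(s^{k+1}) < c_i(s^k). -/

import Mathlib

open Finset

/-- In a congestion game, the number of players using resource `r` in state `s`. -/
def usage {n : ℕ} {R : Type*} [Fintype R] [DecidableEq R]
    (s : Fin n → Finset R) (r : R) : ℕ :=
  (Finset.univ.filter (fun j : Fin n => r ∈ s j)).card

/-- The cost of player `i` in state `s`: `c_i(s) = ∑_{r ∈ s_i} d_r(f_s(r))`. -/
def cost {n : ℕ} {R : Type*} [Fintype R] [DecidableEq R]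
    (d : R → ℕ → ℕ) (i : Fin n) (s : Fin n → Finset R) : ℕ :=
  ∑ r ∈ s i, d r (usage s r)

/-- Rosenthal's potential function: `Φ(s) = ∑_{r ∈ R} ∑_{k=1}^{f_s(r)} d_r(k)`. -/
def potential {n : ℕ} {R : Type*} [Fintype R] [DecidableEq R]
    (d : R → ℕ → ℕ) (s : Fin n → Finset R) : ℕ :=
  ∑ r : R, ∑ k ∈ Finset.Icc 1 (usage s r), d r k

lemma usage_split {n : ℕ} {R : Type*} [Fintype R] [DecidableEq R]
    (s : Fin n → Finset R) (i : Fin n) (r : R) :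
    usage s r = ((Finset.univ.erase i).filter (fun j => r ∈ s j)).card
      + (if r ∈ s i then 1 else 0) := by
  unfold usage
  rw [Finset.card_filter, Finset.card_filter,
    ← Finset.sum_erase_add (Finset.univ) _ (Finset.mem_univ i)]

lemma cost_eq {n : ℕ} {R : Type*} [Fintype R] [DecidableEq R]
    (d : R → ℕ → ℕ) (i : Fin n) (s : Fin n → Finset R) :
    cost d i s = ∑ r : R, (if r ∈ s i then d r (usage s r) else 0) := by
  unfold cost
  rw [Finset.sum_ite_mem, Finset.univ_inter]

lemma potential_key {n : ℕ} {R : Type*} [Fintype R] [DecidableEq R]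
    (d : R → ℕ → ℕ) (i : Fin n) (s s' : Fin n → Finset R)
    (h : ∀ j, j ≠ i → s' j = s j) :
    potential d s' + cost d i s = potential d s + cost d i s' := by
  rw [cost_eq, cost_eq]
  unfold potential
  rw [← Finset.sum_add_distrib, ← Finset.sum_add_distrib]
  apply Finset.sum_congr rfl
  intro r _
  have hfilter : (Finset.univ.erase i).filter (fun j => r ∈ s' j)
      = (Finset.univ.erase i).filter (fun j => r ∈ s j) := by
    apply Finset.filter_congr
    intro j hj
    rw [h j (Finset.mem_erase.1 hj).1]
  have hu := usage_split s i r
  have hu' := usage_split s' i r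
  rw [hfilter] at hu'
  set a := ((Finset.univ.erase i).filter (fun j => r ∈ s j)).card with ha
  by_cases h1 : r ∈ s i <;> by_cases h2 : r ∈ s' i <;>
    simp only [h1, h2, if_true, if_false, add_zero] at hu hu' ⊢
  · rw [hu, hu', add_comm]
  · rw [hu, hu']
    rw [Finset.sum_Icc_succ_top (by omega : 1 ≤ a + 1)]
  · rw [hu, hu']
    rw [Finset.sum_Icc_succ_top (by omega : 1 ≤ a + 1)]
  · rw [hu, hu']

/-- In every congestion game, every sequence of improvement steps is finite: there
is no infinite sequence of states in which each successive state is obtained from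
the previous one by a single player unilaterally changing his strategy so as to
strictly decrease his own cost. -/
theorem congestionGame_improvement_sequences_finite {n : ℕ} {R : Type*}
    [Fintype R] [DecidableEq R]
    (Strat : Fin n → Finset (Finset R)) (d : R → ℕ → ℕ) (hd : ∀ r, Monotone (d r)) :
    ¬ ∃ seq : ℕ → (Fin n → Finset R),
        (∀ k i, seq k i ∈ Strat i) ∧
        ∀ k : ℕ, ∃ i : Fin n,
          (∀ j, j ≠ i → seq (k + 1) j = seq k j) ∧
          cost d i (seq (k + 1)) < cost d i (seq k) := by
  rintro ⟨seq, _, hstep⟩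
  have hdec : ∀ k, potential d (seq (k + 1)) < potential d (seq k) := by
    intro k
    obtain ⟨i, hi, hc⟩ := hstep k
    have := potential_key d i (seq k) (seq (k + 1)) hi
    omega
  have hbound : ∀ k, potential d (seq k) + k ≤ potential d (seq 0) := by
    intro k
    induction k with
    | zero => omega
    | succ m ih => have := hdec m; omega
  have := hbound (potential d (seq 0) + 1)
  omega
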